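/- arXiv:1610.06516 — 4 statements merged into one kernel-verified Lean document; each statement's English description precedes it below -/
import Mathlib

section
/- Let L be a Lie algebra over a field. The set Δ(L) = {x ∈ L : the image of the map ad x : L → L is finite-dimensional} is a Lie ideal of L. -/
section aux

variable {F L : Type*} [Field F] [LieRing L] [LieAlgebra F L]

private lemma fin_of_le {p q : Submodule F L} (h : p ≤ q)
    (hq : Module.Finite F q) : Module.Finite F p :=
  haveI : FiniteDimensional F q := hq
  Submodule.finiteDimensional_of_le h

private lemma fin_range_add {f g : L →ₗ[F] L}
    (hf : Module.Finite F (LinearMap.range f)) (hg : Module.Finite F (LinearMap.range g)) :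
    Module.Finite F (LinearMap.range (f + g)) := by
  haveI : FiniteDimensional F (LinearMap.range f) := hf
  haveI : FiniteDimensional F (LinearMap.range g) := hg
  refine fin_of_le (q := LinearMap.range f ⊔ LinearMap.range g) ?_
    (Submodule.finiteDimensional_sup _ _)
  rintro y ⟨x, rfl⟩
  exact Submodule.add_mem_sup (LinearMap.mem_range_self f x) (LinearMap.mem_range_self g x)

end aux

/-- For a Lie algebra `L` over a field `F`, the set
`Δ(L) = {x ∈ L | dim [L, x] < ∞}` (where `[L, x]` is the image of `ad x`)
is a Lie ideal of `L`. -/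
theorem delta_is_lie_ideal
    (F : Type*) (L : Type*) [Field F] [LieRing L] [LieAlgebra F L] :
    ∃ I : LieIdeal F L,
      (I : Set L) = {x : L | Module.Finite F (LinearMap.range (LieAlgebra.ad F L x))} := by
  refine ⟨{ carrier := {x : L | Module.Finite F (LinearMap.range (LieAlgebra.ad F L x))}
            add_mem' := ?_
            zero_mem' := ?_
            smul_mem' := ?_
            lie_mem := ?_ }, rfl⟩
  · intro a b ha hb
    show Module.Finite F (LinearMap.range (LieAlgebra.ad F L (a + b)))
    rw [map_add]
    exact fin_range_add ha hb
  · show Module.Finite F (LinearMap.range (LieAlgebra.ad F L 0))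
    rw [map_zero, LinearMap.range_zero]
    infer_instance
  · intro c x hx
    show Module.Finite F (LinearMap.range (LieAlgebra.ad F L (c • x)))
    rw [map_smul]
    refine fin_of_le ?_ hx
    rintro y ⟨z, rfl⟩
    exact Submodule.smul_mem _ c (LinearMap.mem_range_self _ z)
  · intro x m hm
    simp only [Set.mem_setOf_eq] at hm ⊢
    haveI : FiniteDimensional F (LinearMap.range (LieAlgebra.ad F L m)) := hm
    have key : LieAlgebra.ad F L ⁅x, m⁆ =
        LieAlgebra.ad F L x ∘ₗ LieAlgebra.ad F L m
          + -(LieAlgebra.ad F L m ∘ₗ LieAlgebra.ad F L x) := by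
      letI := LieRing.ofAssociativeRing (A := Module.End F L)
      rw [LieHom.map_lie, Ring.lie_def]
      rw [sub_eq_add_neg, Module.End.mul_eq_comp, Module.End.mul_eq_comp]
    rw [key]
    have h1 : Module.Finite F (LinearMap.range (LieAlgebra.ad F L x ∘ₗ LieAlgebra.ad F L m)) := by
      rw [LinearMap.range_comp]
      exact Module.Finite.map _ _
    have h2 : Module.Finite F (LinearMap.range (LieAlgebra.ad F L m ∘ₗ LieAlgebra.ad F L x)) :=
      fin_of_le (LinearMap.range_comp_le_range _ _) hm
    exact fin_range_add h1 (by rwa [LinearMap.range_neg])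
end

section
/- Let L be a restricted Lie algebra over a field of characteristic p > 0. The sum of any two p-nil restricted ideals of L is again a p-nil restricted ideal. Consequently, the sum O_p(L) of all p-nil restricted ideals of L is itself a p-nil restricted ideal. -/
/-- A restricted Lie algebra over a field `F` of characteristic `p`: a Lie algebra
equipped with a `p`-mapping `x ↦ x^[p]` satisfying `(a • x)^[p] = aᵖ • x^[p]`,
`ad (x^[p]) = (ad x)ᵖ`, and a Jacobson-type formula: `(x+y)^[p] - x^[p] - y^[p]` is a
sum of Lie commutators of elements of the Lie subalgebra generated by `x` and `y`. -/
class RestrictedLie (p : ℕ) (F : Type*) (L : Type*) [Field F] [LieRing L]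
    [LieAlgebra F L] : Type _ where
  pmap : L → L
  pmap_smul : ∀ (a : F) (x : L), pmap (a • x) = a ^ p • pmap x
  ad_pmap : ∀ x y : L, ⁅pmap x, y⁆ = ((LieAlgebra.ad F L x) ^ p) y
  pmap_add_sub_mem : ∀ x y : L,
    pmap (x + y) - pmap x - pmap y ∈ Submodule.span F
      {z : L | ∃ u ∈ LieSubalgebra.lieSpan F L {x, y},
        ∃ v ∈ LieSubalgebra.lieSpan F L {x, y}, z = ⁅u, v⁆}

namespace RestrictedLie

variable (p : ℕ) (F : Type*) {L : Type*} [Field F] [LieRing L] [LieAlgebra F L]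
  [RestrictedLie p F L]

/-- An element `x` is `p`-nilpotent if some iterate of the `p`-mapping kills it. -/
def IsPNilpotent (x : L) : Prop :=
  ∃ n : ℕ, (pmap (p := p) (F := F))^[n] x = 0

/-- A subset is `p`-nil if all of its elements are `p`-nilpotent. -/
def IsPNil (S : Set L) : Prop := ∀ x ∈ S, IsPNilpotent p F x

/-- A Lie ideal is restricted if it is closed under the `p`-mapping. -/
def IsRestrictedIdeal (I : LieIdeal F L) : Prop :=
  ∀ x ∈ I, pmap (p := p) (F := F) x ∈ I

/-- The restricted subalgebra generated by a set: the smallest Lie subalgebra containing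
the set and closed under the `p`-mapping. -/
def restrictedSpan (s : Set L) : LieSubalgebra F L :=
  sInf {K : LieSubalgebra F L | s ⊆ K ∧ ∀ x ∈ K, pmap (p := p) (F := F) x ∈ K}

end RestrictedLie

/-- `ι : L → A` exhibits the associative algebra `A` as the restricted enveloping algebra
`u(L)` of the restricted Lie algebra `L`: `ι` respects brackets and the `p`-mapping, and
is universal among such maps into associative `F`-algebras; moreover `ι` is injective
(by the PBW theorem). -/
structure IsRestrictedEnvelope (p : ℕ) (F : Type*) {L A : Type*} [Field F] [LieRing L]
    [LieAlgebra F L] [RestrictedLie p F L] [Ring A] [Algebra F A]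
    (ι : L →ₗ[F] A) : Prop where
  map_lie : ∀ x y : L, ι ⁅x, y⁆ = ι x * ι y - ι y * ι x
  map_pmap : ∀ x : L, ι (RestrictedLie.pmap (p := p) (F := F) x) = (ι x) ^ p
  injective : Function.Injective ι
  universal : ∀ (B : Type*) [Ring B] [Algebra F B] (f : L →ₗ[F] B),
    (∀ x y : L, f ⁅x, y⁆ = f x * f y - f y * f x) →
    (∀ x : L, f (RestrictedLie.pmap (p := p) (F := F) x) = (f x) ^ p) →
    ∃! g : A →ₐ[F] B, ∀ x : L, g (ι x) = f x

namespace RestrictedLie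

variable {p : ℕ} {F L : Type*} [Field F] [LieRing L] [LieAlgebra F L] [RestrictedLie p F L]

lemma pmap_zero (hp : p ≠ 0) : pmap (p := p) (F := F) (0 : L) = 0 := by
  have := pmap_smul (p := p) (F := F) (L := L) 0 0
  simpa [zero_pow hp] using this

/-- Key lemma: if `I` is a restricted ideal, then `pmap (y + i) - pmap y ∈ I`. -/
lemma pmap_add_mem (I : LieIdeal F L) (hI : IsRestrictedIdeal p F I)
    {y i : L} (hi : i ∈ I) : pmap (p := p) (F := F) (y + i) - pmap (p := p) (F := F) y ∈ I := by
  -- the submodule `F•y + I` is a Lie subalgebra with brackets landing in `I`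
  set N : Submodule F L := Submodule.span F {y} ⊔ I.toSubmodule with hN
  have hbr : ∀ u v : L, u ∈ N → v ∈ N → ⁅u, v⁆ ∈ I := by
    intro u v hu hv
    obtain ⟨u1, hu1, u2, hu2, rfl⟩ := Submodule.mem_sup.mp hu
    obtain ⟨v1, hv1, v2, hv2, rfl⟩ := Submodule.mem_sup.mp hv
    obtain ⟨α, rfl⟩ := Submodule.mem_span_singleton.mp hu1
    obtain ⟨β, rfl⟩ := Submodule.mem_span_singleton.mp hv1
    have h2 : (u2 : L) ∈ I := hu2
    have h3 : (v2 : L) ∈ I := hv2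
    have e : ⁅α • y + u2, β • y + v2⁆ =
        α • ⁅y, v2⁆ + β • ⁅u2, y⁆ + ⁅u2, v2⁆ := by
      simp only [add_lie, lie_add, smul_lie, lie_smul, smul_smul, lie_self,
        smul_zero, zero_add, add_zero]
      abel
    rw [e]
    have hu2y : ⁅u2, y⁆ ∈ I := by
      rw [← lie_skew]
      exact neg_mem (I.lie_mem h2)
    exact I.add_mem (I.add_mem (I.smul_mem α (I.lie_mem h3))
      (I.smul_mem β hu2y)) (I.lie_mem h3)
  have hbr' : ∀ u v : L, u ∈ N → v ∈ N → ⁅u, v⁆ ∈ N :=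
    fun u v hu hv => le_sup_right (α := Submodule F L) (hbr u v hu hv)
  let K : LieSubalgebra F L := { N with lie_mem' := fun {u v} hu hv => hbr' u v hu hv }
  have hyK : y ∈ K := le_sup_left (α := Submodule F L) (Submodule.mem_span_singleton_self y)
  have hiK : i ∈ K := le_sup_right (α := Submodule F L) hi
  have hspan : LieSubalgebra.lieSpan F L {y, i} ≤ K := by
    rw [LieSubalgebra.lieSpan_le]
    intro z hz
    rcases hz with rfl | rfl
    · exact hyK
    · exact hiK
  have hmem := pmap_add_sub_mem (p := p) (F := F) y i
  have hsub : Submodule.span F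
      {z : L | ∃ u ∈ LieSubalgebra.lieSpan F L {y, i},
        ∃ v ∈ LieSubalgebra.lieSpan F L {y, i}, z = ⁅u, v⁆} ≤ I.toSubmodule := by
    rw [Submodule.span_le]
    rintro z ⟨u, hu, v, hv, rfl⟩
    exact hbr u v (hspan hu) (hspan hv)
  have h1 : pmap (p := p) (F := F) (y + i) - pmap (p := p) (F := F) y
      - pmap (p := p) (F := F) i ∈ I := hsub hmem
  have h2 : pmap (p := p) (F := F) i ∈ I := hI i hi
  have := I.add_mem h1 h2
  simpa using this

lemma iterate_pmap_add_mem (I : LieIdeal F L) (hI : IsRestrictedIdeal p F I)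
    {y i : L} (hi : i ∈ I) (n : ℕ) :
    (pmap (p := p) (F := F))^[n] (y + i) - (pmap (p := p) (F := F))^[n] y ∈ I := by
  induction n generalizing y i with
  | zero => simpa using hi
  | succ n ih =>
    rw [Function.iterate_succ_apply', Function.iterate_succ_apply']
    set z := (pmap (p := p) (F := F))^[n] y
    have hj : (pmap (p := p) (F := F))^[n] (y + i) - z ∈ I := ih hi
    have : (pmap (p := p) (F := F))^[n] (y + i) = z + ((pmap (p := p) (F := F))^[n] (y + i) - z) := by
      abel
    rw [this]
    exact pmap_add_mem I hI hj

lemma isPNilpotent_of_mem (I : LieIdeal F L) (hI : IsRestrictedIdeal p F I)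
    (hnil : IsPNil p F (I : Set L)) {x : L} (hx : x ∈ I) : IsPNilpotent p F x := hnil x hx

end RestrictedLie

open RestrictedLie in
/-- The sum of two `p`-nil restricted ideals of a restricted Lie algebra is a `p`-nil
restricted ideal; consequently the sum `O_p(L)` of all `p`-nil restricted ideals is
itself a `p`-nil restricted ideal. -/
theorem sup_pnil_restricted_ideals_and_Op
    {p : ℕ} {F L : Type*} [Field F] [LieRing L] [LieAlgebra F L] [RestrictedLie p F L]
    (hp : p.Prime) [CharP F p] :
    (∀ I J : LieIdeal F L,
      IsRestrictedIdeal p F I → IsRestrictedIdeal p F J →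
      IsPNil p F (I : Set L) → IsPNil p F (J : Set L) →
        IsRestrictedIdeal p F (I ⊔ J) ∧ IsPNil p F ((I ⊔ J : LieIdeal F L) : Set L)) ∧
    (IsRestrictedIdeal p F
        (sSup {I : LieIdeal F L | IsRestrictedIdeal p F I ∧ IsPNil p F (I : Set L)}) ∧
      IsPNil p F
        ((sSup {I : LieIdeal F L | IsRestrictedIdeal p F I ∧ IsPNil p F (I : Set L)} :
          LieIdeal F L) : Set L)) := by
  classical
  have hp0 : p ≠ 0 := hp.ne_zero
  have part1 : ∀ I J : LieIdeal F L,
      IsRestrictedIdeal p F I → IsRestrictedIdeal p F J →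
      IsPNil p F (I : Set L) → IsPNil p F (J : Set L) →
        IsRestrictedIdeal p F (I ⊔ J) ∧ IsPNil p F ((I ⊔ J : LieIdeal F L) : Set L) := by
    intro I J hIr hJr hIn hJn
    constructor
    · intro x hx
      obtain ⟨a, ha, b, hb, rfl⟩ := (LieSubmodule.mem_sup _ _ _).mp hx
      have hdiff : pmap (p := p) (F := F) (b + a) - pmap (p := p) (F := F) b ∈ I :=
        pmap_add_mem I hIr ha
      have hpb : pmap (p := p) (F := F) b ∈ J := hJr b hb
      have : pmap (p := p) (F := F) (a + b) =
          (pmap (p := p) (F := F) (b + a) - pmap (p := p) (F := F) b)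
            + pmap (p := p) (F := F) b := by
        rw [add_comm a b]; abel
      rw [this]
      exact (LieSubmodule.mem_sup _ _ _).mpr ⟨_, hdiff, _, hpb, rfl⟩
    · intro x hx
      obtain ⟨a, ha, b, hb, rfl⟩ := (LieSubmodule.mem_sup _ _ _).mp hx
      obtain ⟨n, hn⟩ := hJn b hb
      have hmem : (pmap (p := p) (F := F))^[n] (a + b) ∈ I := by
        have := iterate_pmap_add_mem I hIr ha n (y := b)
        rw [hn, sub_zero, add_comm b a] at this
        exact this
      obtain ⟨m, hm⟩ := hIn _ hmem
      exact ⟨m + n, by rw [Function.iterate_add_apply]; exact hm⟩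
  refine ⟨part1, ?_⟩
  set S : Set (LieIdeal F L) :=
    {I : LieIdeal F L | IsRestrictedIdeal p F I ∧ IsPNil p F (I : Set L)} with hS
  have hbot : (⊥ : LieIdeal F L) ∈ S := by
    constructor
    · intro x hx
      rw [LieSubmodule.mem_bot] at hx
      subst hx
      rw [pmap_zero hp0]
      exact (LieSubmodule.mem_bot _).mpr rfl
    · intro x hx
      rw [SetLike.mem_coe, LieSubmodule.mem_bot] at hx
      subst hx
      exact ⟨0, rfl⟩
  have hne : {(s : Submodule F L) | s ∈ S}.Nonempty :=
    ⟨_, ⟨⊥, hbot, rfl⟩⟩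
  have hdir : DirectedOn (· ≤ ·) {(s : Submodule F L) | s ∈ S} := by
    rintro _ ⟨I, hI, rfl⟩ _ ⟨J, hJ, rfl⟩
    refine ⟨((I ⊔ J : LieIdeal F L) : Submodule F L),
      ⟨I ⊔ J, (part1 I J hI.1 hJ.1 hI.2 hJ.2), rfl⟩, ?_, ?_⟩
    · exact (LieSubmodule.toSubmodule_le_toSubmodule _ _).mpr le_sup_left
    · exact (LieSubmodule.toSubmodule_le_toSubmodule _ _).mpr le_sup_right
  have key : ∀ x : L, x ∈ sSup S → ∃ I ∈ S, x ∈ I := by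
    intro x hx
    rw [← LieSubmodule.mem_toSubmodule, LieSubmodule.sSup_toSubmodule] at hx
    obtain ⟨s, ⟨I, hIS, rfl⟩, hxs⟩ := (Submodule.mem_sSup_of_directed hne hdir).mp hx
    exact ⟨I, hIS, hxs⟩
  constructor
  · intro x hx
    obtain ⟨I, hIS, hxI⟩ := key x hx
    exact le_sSup hIS (hIS.1 x hxI)
  · intro x hx
    obtain ⟨I, hIS, hxI⟩ := key x hx
    exact hIS.2 x hxI
end

section
/- Let L be the abelian restricted Lie algebra over K = F(t₁, t₂, …) (F a field of characteristic 2) with basis x, y₁, y₂, … and p-mapping determined by x^[2] = x and yᵢ^[2] = tᵢ x. Then L has no nonzero p-nilpotent elements; in particular O_p(L) = 0. -/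
/-- The field `K = F(t₁, t₂, …)` of rational functions in countably many indeterminates. -/
abbrev RatFunField (F : Type*) [Field F] := FractionRing (MvPolynomial ℕ F)

open MvPolynomial

private lemma sq_pderiv_zero {F : Type*} [Field F] [CharP F 2] (i : ℕ)
    (f : MvPolynomial ℕ F) : MvPolynomial.pderiv i (f ^ 2) = 0 := by
  haveI : CharP (MvPolynomial ℕ F) 2 := MvPolynomial.instCharP _ _ 2
  rw [sq, Derivation.leibniz]
  exact CharTwo.add_self_eq_zero _

private lemma poly_key {F : Type*} [Field F] [CharP F 2] (s : Finset (Option ℕ))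
    (a : Option ℕ → MvPolynomial ℕ F)
    (h : ∑ j ∈ s, (a j) ^ 2 * (Option.elim j 1 MvPolynomial.X) = 0) :
    ∀ j ∈ s, a j = 0 := by
  classical
  have hterm : ∀ (i : ℕ) (j : Option ℕ),
      MvPolynomial.pderiv i ((a j) ^ 2 * Option.elim j 1 MvPolynomial.X)
        = (a j) ^ 2 • MvPolynomial.pderiv i (Option.elim j 1 MvPolynomial.X) := by
    intro i j
    rw [Derivation.leibniz, sq_pderiv_zero, smul_zero, add_zero]
  have hsome : ∀ i : ℕ, some i ∈ s → a (some i) = 0 := by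
    intro i hi
    have h2 := congrArg (MvPolynomial.pderiv i) h
    rw [map_zero, map_sum] at h2
    have hstep := Finset.sum_eq_single_of_mem (f := fun j =>
        MvPolynomial.pderiv i ((a j) ^ 2 * Option.elim j 1 MvPolynomial.X)) (some i) hi ?_
    · rw [hstep] at h2
      simp only [hterm] at h2
      simp only [Option.elim, MvPolynomial.pderiv_X, Pi.single_eq_same, smul_eq_mul,
        mul_one] at h2
      exact pow_eq_zero_iff (n := 2) (by norm_num) |>.mp h2
    · intro j hj hne
      simp only [hterm]
      cases j with
      | none => simp
      | some k =>
        have hk : k ≠ i := fun h => hne (by rw [h])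
        simp [MvPolynomial.pderiv_X, Pi.single_eq_of_ne hk]
  intro j hj
  cases j with
  | some i => exact hsome i hj
  | none =>
    have hstep := Finset.sum_eq_single_of_mem (f := fun j =>
        (a j) ^ 2 * Option.elim j 1 MvPolynomial.X) none hj ?_
    · rw [hstep] at h
      beta_reduce at h
      simp only [Option.elim, mul_one] at h
      exact pow_eq_zero_iff (n := 2) (by norm_num) |>.mp h
    · intro j hjs hne
      cases j with
      | none => exact absurd rfl hne
      | some i => simp [hsome i hjs]

private lemma field_key {F : Type*} [Field F] [CharP F 2] (s : Finset (Option ℕ))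
    (β : Option ℕ → RatFunField F)
    (h : ∑ j ∈ s, (β j) ^ 2 * (Option.elim j 1
      (fun i => algebraMap (MvPolynomial ℕ F) (RatFunField F) (MvPolynomial.X i))) = 0) :
    ∀ j ∈ s, β j = 0 := by
  classical
  obtain ⟨b, hb⟩ := IsLocalization.exist_integer_multiples
    (nonZeroDivisors (MvPolynomial ℕ F)) s β
  simp only [IsLocalization.IsInteger, RingHom.mem_range] at hb
  choose! a ha using hb
  have hb0 : algebraMap (MvPolynomial ℕ F) (RatFunField F) (b : MvPolynomial ℕ F) ≠ 0 := by
    have := nonZeroDivisors.coe_ne_zero b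
    exact fun hc => this (IsFractionRing.injective (MvPolynomial ℕ F) (RatFunField F)
      (by rw [hc, map_zero]))
  have hpoly : ∑ j ∈ s, (a j) ^ 2 * (Option.elim j 1 MvPolynomial.X) = 0 := by
    apply IsFractionRing.injective (MvPolynomial ℕ F) (RatFunField F)
    rw [map_zero, map_sum]
    have hterm : ∀ j ∈ s,
        algebraMap (MvPolynomial ℕ F) (RatFunField F) ((a j) ^ 2 * Option.elim j 1 MvPolynomial.X)
          = (algebraMap (MvPolynomial ℕ F) (RatFunField F) (b : MvPolynomial ℕ F)) ^ 2 *
            ((β j) ^ 2 * Option.elim j 1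
              (fun i => algebraMap (MvPolynomial ℕ F) (RatFunField F) (MvPolynomial.X i))) := by
      intro j hj
      rw [map_mul, map_pow, ha j hj, Algebra.smul_def]
      cases j <;> simp <;> ring
    rw [Finset.sum_congr rfl hterm, ← Finset.mul_sum, h, mul_zero]
  intro j hj
  have h0 := poly_key s a hpoly j hj
  have h1 : (b : MvPolynomial ℕ F) • β j = 0 := by
    rw [← ha j hj, h0, map_zero]
  rw [Algebra.smul_def] at h1
  exact (mul_eq_zero.mp h1).resolve_left hb0

open RestrictedLie in
/-- Let `L` be the abelian restricted Lie algebra over `K = F(t₁, t₂, …)` (`F` of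
characteristic 2) with basis `x, y₁, y₂, …` and `p`-mapping determined by `x^[2] = x`
and `yᵢ^[2] = tᵢ • x`.  Then `L` has no nonzero `p`-nilpotent elements; in particular
every `p`-nil restricted ideal is zero, i.e. `O_p(L) = 0`. -/
theorem no_pnilpotent_elements_example
    {F : Type*} [Field F] [CharP F 2] {L : Type*} [LieRing L]
    [LieAlgebra (RatFunField F) L] [RestrictedLie 2 (RatFunField F) L]
    (habelian : ∀ a b : L, ⁅a, b⁆ = 0)
    (bs : Module.Basis (Option ℕ) (RatFunField F) L)
    (hx : pmap (p := 2) (F := RatFunField F) (bs none) = bs none)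
    (hy : ∀ i : ℕ, pmap (p := 2) (F := RatFunField F) (bs (some i)) =
      algebraMap (MvPolynomial ℕ F) (RatFunField F) (MvPolynomial.X i) • bs none) :
    (∀ z : L, IsPNilpotent 2 (RatFunField F) z → z = 0) ∧
    ∀ I : LieIdeal (RatFunField F) L,
      IsRestrictedIdeal 2 (RatFunField F) I →
      IsPNil 2 (RatFunField F) (I : Set L) → I = ⊥ := by
  classical
  set K := RatFunField F
  set T : Option ℕ → K := fun j => Option.elim j 1
    (fun i => algebraMap (MvPolynomial ℕ F) (RatFunField F) (MvPolynomial.X i)) with hT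
  have hadd : ∀ u v : L, pmap (p := 2) (F := K) (u + v)
      = pmap (p := 2) (F := K) u + pmap (p := 2) (F := K) v := by
    intro u v
    have h := RestrictedLie.pmap_add_sub_mem (p := 2) (F := K) u v
    have hsub : {z : L | ∃ u' ∈ LieSubalgebra.lieSpan K L {u, v},
        ∃ v' ∈ LieSubalgebra.lieSpan K L {u, v}, z = ⁅u', v'⁆} ⊆ {0} := by
      rintro z ⟨u', -, v', -, rfl⟩
      exact habelian u' v'
    have hspan : Submodule.span K {z : L | ∃ u' ∈ LieSubalgebra.lieSpan K L {u, v},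
        ∃ v' ∈ LieSubalgebra.lieSpan K L {u, v}, z = ⁅u', v'⁆} ≤ ⊥ := by
      rw [← Submodule.span_zero_singleton K]
      exact Submodule.span_mono hsub
    have h0 : pmap (p := 2) (F := K) (u + v) - pmap (p := 2) (F := K) u
        - pmap (p := 2) (F := K) v = 0 := hspan h
    rw [sub_sub, sub_eq_zero] at h0
    exact h0
  have hzero : pmap (p := 2) (F := K) (0 : L) = 0 := by
    have h := RestrictedLie.pmap_smul (p := 2) (F := K) (0 : K) (0 : L)
    simpa using h
  have hsum : ∀ (s : Finset (Option ℕ)) (g : Option ℕ → L),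
      pmap (p := 2) (F := K) (∑ j ∈ s, g j) = ∑ j ∈ s, pmap (p := 2) (F := K) (g j) := by
    intro s g
    induction s using Finset.induction_on with
    | empty => simpa using hzero
    | insert _ _ hns ih => rw [Finset.sum_insert hns, hadd, ih, Finset.sum_insert hns]
  have hbasic : ∀ (j : Option ℕ) (c : K),
      pmap (p := 2) (F := K) (c • bs j) = (c ^ 2 * T j) • bs none := by
    intro j c
    rw [RestrictedLie.pmap_smul]
    cases j with
    | none => rw [hx, hT]; simp
    | some i => rw [hy i, smul_smul, hT]; rfl
  have hpmap : ∀ z : L, pmap (p := 2) (F := K) z =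
      (∑ j ∈ (bs.repr z).support, (bs.repr z j) ^ 2 * T j) • bs none := by
    intro z
    conv_lhs => rw [← bs.linearCombination_repr z, Finsupp.linearCombination_apply,
      Finsupp.sum]
    rw [hsum, Finset.sum_congr rfl (fun j _ => hbasic j _), ← Finset.sum_smul]
  have hC : ∀ z : L, (∑ j ∈ (bs.repr z).support, (bs.repr z j) ^ 2 * T j) = 0 → z = 0 := by
    intro z hz
    have hall := field_key (bs.repr z).support (fun j => bs.repr z j) (by
      rw [hT] at hz; exact hz)
    have hrepr : bs.repr z = 0 := by
      ext j
      by_cases hj : j ∈ (bs.repr z).support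
      · exact hall j hj
      · simpa using Finsupp.notMem_support_iff.mp hj
    exact (LinearEquiv.map_eq_zero_iff bs.repr).mp hrepr
  have main : ∀ z : L, IsPNilpotent 2 K z → z = 0 := by
    intro z hz
    by_contra hz0
    obtain ⟨n, hn⟩ := hz
    have hc0 : (∑ j ∈ (bs.repr z).support, (bs.repr z j) ^ 2 * T j) ≠ 0 :=
      fun h => hz0 (hC z h)
    have hiter : ∀ m : ℕ, ∃ d : K, d ≠ 0 ∧
        (pmap (p := 2) (F := K))^[m + 1] z = d • bs none := by
      intro m
      induction m with
      | zero => exact ⟨_, hc0, by simpa using hpmap z⟩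
      | succ k ih =>
        obtain ⟨d, hd, hkd⟩ := ih
        refine ⟨d ^ 2, pow_ne_zero _ hd, ?_⟩
        rw [Function.iterate_succ_apply', hkd, hbasic none d, hT]
        simp
    cases n with
    | zero => exact hz0 (by simpa using hn)
    | succ m =>
      obtain ⟨d, hd, hkd⟩ := hiter m
      rw [hkd] at hn
      rcases smul_eq_zero.mp hn with h | h
      · exact hd h
      · exact bs.ne_zero none h
  refine ⟨main, fun I _ hnil => ?_⟩
  rw [LieSubmodule.eq_bot_iff]
  intro m hm
  exact main m (hnil m hm)
end

section
/- A semiprime ring satisfying the descending chain condition on principal right ideals is semisimple Artinian. -/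
/-- The principal right ideal generated by `a`, as a set. -/
def principalRightIdeal {R : Type*} [Ring R] (a : R) : Set R := {x : R | ∃ r : R, x = a * r}

section Aux

variable {R : Type*} [Ring R]

lemma pri_self (a : R) : a ∈ principalRightIdeal a := ⟨1, (mul_one a).symm⟩

lemma pri_subset {a b : R} (h : b ∈ principalRightIdeal a) :
    principalRightIdeal b ⊆ principalRightIdeal a := by
  obtain ⟨r, rfl⟩ := h
  rintro x ⟨s, rfl⟩
  exact ⟨r * s, mul_assoc a r s⟩

/-- Elementwise semiprimeness extracted from the two-sided-ideal hypothesis. -/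
lemma semiprime_elem
    (hsemiprime : ∀ I : TwoSidedIdeal R,
      (∃ n : ℕ, ∀ f : Fin n → R, (∀ i, f i ∈ I) → (List.ofFn f).prod = 0) → I = ⊥)
    {a : R} (h : ∀ s : R, a * s * a = 0) : a = 0 := by
  have hspan : TwoSidedIdeal.span {a} = ⊥ := by
    apply hsemiprime
    refine ⟨2, fun f hf => ?_⟩
    have hprod : (List.ofFn f).prod = f 0 * f 1 := by
      simp [List.ofFn_succ]
    rw [hprod]
    have key : ∀ x y : R, x ∈ TwoSidedIdeal.span {a} → y ∈ TwoSidedIdeal.span {a} →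
        x * y = 0 := by
      intro x y hx hy
      rw [TwoSidedIdeal.mem_span_iff_mem_addSubgroup_closure] at hx hy
      induction hx, hy using AddSubgroup.closure_induction₂ with
      | mem x y hx hy =>
        obtain ⟨u, hu, v, -, rfl⟩ := hx
        obtain ⟨u', hu', v', -, rfl⟩ := hy
        obtain ⟨p, -, q, hq, rfl⟩ := hu
        obtain ⟨p', -, q', hq', rfl⟩ := hu'
        rw [Set.mem_singleton_iff] at hq hq'
        rw [hq, hq']
        calc p * a * v * (p' * a * v') = p * (a * (v * p') * a) * v' := by noncomm_ring
          _ = 0 := by rw [h, mul_zero, zero_mul]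
      | zero_left x hx => rw [zero_mul]
      | zero_right x hx => rw [mul_zero]
      | add_left x y z hx hy hz h1 h2 => rw [add_mul, h1, h2, add_zero]
      | add_right y z x hy hz hx h1 h2 => rw [mul_add, h1, h2, add_zero]
      | neg_left x y hx hy h1 => rw [neg_mul, h1, neg_zero]
      | neg_right x y hx hy h1 => rw [mul_neg, h1, neg_zero]
    exact key _ _ (hf 0) (hf 1)
  have : a ∈ TwoSidedIdeal.span {a} := TwoSidedIdeal.subset_span rfl
  rw [hspan, TwoSidedIdeal.mem_bot] at this
  exact this

/-- From the DCC hypothesis: every nonempty family of principal right ideals has a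
minimal member. -/
lemma dcc_min
    (hdcc : ∀ f : ℕ → R,
      (∀ n : ℕ, principalRightIdeal (f (n + 1)) ⊆ principalRightIdeal (f n)) →
      ∃ N : ℕ, ∀ n ≥ N, principalRightIdeal (f n) = principalRightIdeal (f N))
    (T : Set R) (hT : T.Nonempty) :
    ∃ a ∈ T, ∀ b ∈ T, principalRightIdeal b ⊆ principalRightIdeal a →
      principalRightIdeal b = principalRightIdeal a := by
  by_contra hcon
  push_neg at hcon
  obtain ⟨a₀, ha₀⟩ := hT
  choose g hg₁ hg₂ hg₃ using hcon
  let step : {x // x ∈ T} → {x // x ∈ T} := fun p => ⟨g p.1 p.2, hg₁ p.1 p.2⟩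
  let F : ℕ → {x // x ∈ T} := fun n => step^[n] ⟨a₀, ha₀⟩
  have hFs : ∀ n, F (n + 1) = step (F n) := fun n =>
    Function.iterate_succ_apply' step n _
  have hsub : ∀ n, principalRightIdeal ((F (n + 1)).1) ⊆ principalRightIdeal ((F n).1) := by
    intro n
    rw [hFs n]
    exact hg₂ _ _
  obtain ⟨N, hN⟩ := hdcc (fun n => (F n).1) hsub
  have heq : principalRightIdeal ((F (N + 1)).1) = principalRightIdeal ((F N).1) :=
    hN (N + 1) (Nat.le_succ N)
  have h2 : principalRightIdeal ((F (N + 1)).1) ≠ principalRightIdeal ((F N).1) := by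
    rw [hFs N]
    exact hg₃ _ _
  exact h2 heq

/-- Brauer's lemma: a minimal principal right ideal in a semiprime ring is generated by
an idempotent. -/
lemma brauer
    (SP : ∀ a : R, (∀ s : R, a * s * a = 0) → a = 0)
    {a : R} (ha : a ≠ 0)
    (hmin : ∀ b ∈ principalRightIdeal a, b ≠ 0 →
      principalRightIdeal b = principalRightIdeal a) :
    ∃ e : R, e ≠ 0 ∧ e * e = e ∧ principalRightIdeal e = principalRightIdeal a := by
  have : ∃ u : R, a * u * a ≠ 0 := by
    by_contra h
    push_neg at h
    exact ha (SP a h)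
  obtain ⟨u, hu⟩ := this
  set x := a * u with hx
  have hxa : x * a ≠ 0 := hu
  have hxmem : x ∈ principalRightIdeal a := ⟨u, rfl⟩
  have hxanz : x * a ∈ principalRightIdeal a := ⟨u * a, by rw [hx, mul_assoc]⟩
  have hxne : x ≠ 0 := by
    intro h; rw [h, zero_mul] at hxa; exact hxa rfl
  have hxaeq : principalRightIdeal (x * a) = principalRightIdeal a := hmin _ hxanz hxa
  have hxin : x ∈ principalRightIdeal (x * a) := by rw [hxaeq]; exact hxmem
  obtain ⟨y, hy⟩ := hxin
  set e := a * y with he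
  have hxe : x * e = x := by rw [he, ← mul_assoc]; exact hy.symm
  have hemem : e ∈ principalRightIdeal a := ⟨y, rfl⟩
  have hkill : ∀ z ∈ principalRightIdeal a, x * z = 0 → z = 0 := by
    intro z hz hxz
    by_contra hzne
    have hz' : principalRightIdeal z = principalRightIdeal a := hmin _ hz hzne
    have : e ∈ principalRightIdeal z := by rw [hz']; exact hemem
    obtain ⟨s, hs⟩ := this
    have : x * e = 0 := by rw [hs, ← mul_assoc, hxz, zero_mul]
    rw [hxe] at this
    exact hxne this
  have hesq : e * e = e := by
    have hmem' : e * e - e ∈ principalRightIdeal a := by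
      refine ⟨y * e - y, ?_⟩
      rw [he]
      noncomm_ring
    have hzero : x * (e * e - e) = 0 := by
      rw [mul_sub, ← mul_assoc, hxe, hxe, sub_self]
    have := hkill _ hmem' hzero
    rwa [sub_eq_zero] at this
  have hene : e ≠ 0 := by
    intro h
    rw [h, mul_zero] at hxe
    exact hxne hxe.symm
  exact ⟨e, hene, hesq, hmin _ hemem hene⟩

/-- A minimal principal right ideal generated by an idempotent `f` gives a simple left
ideal `Rf`, in a semiprime ring. -/
lemma simple_left
    (SP : ∀ a : R, (∀ s : R, a * s * a = 0) → a = 0)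
    {f : R} (hf : f ≠ 0) (hfsq : f * f = f)
    (hmin : ∀ b ∈ principalRightIdeal f, b ≠ 0 →
      principalRightIdeal b = principalRightIdeal f) :
    IsSimpleModule R (Submodule.span R {f}) := by
  rw [isSimpleModule_iff_isAtom]
  have hinv : ∀ c : R, c ≠ 0 → f * c = c → c * f = c → ∃ d : R,
      f * d = d ∧ d * f = d ∧ c * d = f := by
    intro c hc hfc hcf
    have hcmem : c ∈ principalRightIdeal f := ⟨c, hfc.symm⟩
    have : f ∈ principalRightIdeal c := by
      rw [hmin _ hcmem hc]; exact pri_self f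
    obtain ⟨y, hy⟩ := this
    refine ⟨f * y * f, ?_, ?_, ?_⟩
    · rw [show f * (f * y * f) = (f * f) * y * f by noncomm_ring, hfsq]
    · rw [mul_assoc, hfsq]
    · calc c * (f * y * f) = (c * f) * y * f := by noncomm_ring
        _ = (c * y) * f := by rw [hcf]
        _ = f * f := by rw [← hy]
        _ = f := hfsq
  have hinv2 : ∀ c : R, c ≠ 0 → f * c = c → c * f = c → ∃ d : R, d * c = f := by
    intro c hc hfc hcf
    obtain ⟨d, hfd, hdf, hcd⟩ := hinv c hc hfc hcf
    have hdne : d ≠ 0 := by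
      intro h; rw [h, mul_zero] at hcd; exact hf hcd.symm
    obtain ⟨d', hfd', hd'f, hdd'⟩ := hinv d hdne hfd hdf
    have hcd' : c = d' := by
      calc c = c * f := hcf.symm
        _ = c * (d * d') := by rw [hdd']
        _ = (c * d) * d' := by rw [← mul_assoc]
        _ = f * d' := by rw [hcd]
        _ = d' := hfd'
    exact ⟨d, by rw [hcd', hdd']⟩
  constructor
  · intro h
    have : f ∈ Submodule.span R ({f} : Set R) := Submodule.mem_span_singleton_self f
    rw [h, Submodule.mem_bot] at this
    exact hf this
  · intro J hJ
    by_contra hJne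
    have : ∃ a : R, a ∈ J ∧ a ≠ 0 := by
      by_contra h
      push_neg at h
      apply hJne
      rw [eq_bot_iff]
      intro z hz
      rw [Submodule.mem_bot]
      exact h z hz
    obtain ⟨a, haJ, hane⟩ := this
    have haspan : a ∈ Submodule.span R ({f} : Set R) := le_of_lt hJ haJ
    obtain ⟨r, hr⟩ := Submodule.mem_span_singleton.mp haspan
    rw [smul_eq_mul] at hr
    have haf : a * f = a := by rw [← hr, mul_assoc, hfsq]
    have : ∃ t : R, a * t * a ≠ 0 := by
      by_contra h
      push_neg at h
      exact hane (SP a h)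
    obtain ⟨t, ht⟩ := this
    set c := f * t * a with hc
    have hcne : c ≠ 0 := by
      intro hzero
      apply ht
      have h1 : a * t * a = r * (f * t * a) := by
        rw [← hr]; noncomm_ring
      rw [h1, ← hc, hzero, mul_zero]
    have hfc : f * c = c := by
      rw [hc, show f * (f * t * a) = (f * f) * t * a by noncomm_ring, hfsq]
    have hcf : c * f = c := by
      calc c * f = f * t * (a * f) := by rw [hc]; noncomm_ring
        _ = f * t * a := by rw [haf]
        _ = c := hc.symm
    obtain ⟨d, hd⟩ := hinv2 c hcne hfc hcf
    have hfJ : f ∈ J := by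
      have hcomp : (d * f * t) * a = f := by
        calc (d * f * t) * a = d * (f * t * a) := by noncomm_ring
          _ = d * c := by rw [← hc]
          _ = f := hd
      have : f = (d * f * t) • a := by rw [smul_eq_mul, hcomp]
      rw [this]
      exact Submodule.smul_mem J _ haJ
    have hle : Submodule.span R ({f} : Set R) ≤ J := by
      rw [Submodule.span_le, Set.singleton_subset_iff]
      exact hfJ
    exact absurd (lt_of_lt_of_le hJ hle) (lt_irrefl J)

end Aux

/-- A semiprime ring (no nonzero nilpotent two-sided ideals) satisfying the descending
chain condition on principal right ideals is semisimple Artinian. -/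
theorem isSemisimpleRing_of_semiprime_dcc_principal_right
    {R : Type*} [Ring R]
    (hsemiprime : ∀ I : TwoSidedIdeal R,
      (∃ n : ℕ, ∀ f : Fin n → R, (∀ i, f i ∈ I) → (List.ofFn f).prod = 0) → I = ⊥)
    (hdcc : ∀ f : ℕ → R,
      (∀ n : ℕ, principalRightIdeal (f (n + 1)) ⊆ principalRightIdeal (f n)) →
      ∃ N : ℕ, ∀ n ≥ N, principalRightIdeal (f n) = principalRightIdeal (f N)) :
    IsSemisimpleRing R := by
  have SP : ∀ a : R, (∀ s : R, a * s * a = 0) → a = 0 :=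
    fun a h => semiprime_elem hsemiprime h
  set socle := sSup {m : Submodule R R | IsSimpleModule R m} with hsoc
  set T : Set R := {b | ∃ e : R, e * e = e ∧ Submodule.span R {e} ≤ socle ∧ b = 1 - e}
    with hT
  have hTne : T.Nonempty := ⟨1, 0, by rw [mul_zero], by
      rw [Submodule.span_zero_singleton]; exact bot_le, by rw [sub_zero]⟩
  obtain ⟨b₀, hb₀T, hb₀min⟩ := dcc_min hdcc T hTne
  obtain ⟨e₀, he₀sq, he₀soc, hb₀⟩ := hb₀T
  by_cases hb₀z : b₀ = 0
  · have he₀ : e₀ = 1 := by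
      have h := hb₀z
      rw [hb₀, sub_eq_zero] at h
      exact h.symm
    apply IsSemisimpleModule.of_sSup_simples_eq_top
    rw [← hsoc, eq_top_iff]
    intro z _
    have hle : Submodule.span R ({(1 : R)} : Set R) ≤ socle := by rw [← he₀]; exact he₀soc
    exact hle (Submodule.mem_span_singleton.mpr ⟨z, by rw [smul_eq_mul, mul_one]⟩)
  · exfalso
    have hchar : ∀ e : R, e * e = e → ∀ x : R,
        (x ∈ principalRightIdeal (1 - e) ↔ e * x = 0) := by
      intro e hesq x
      constructor
      · rintro ⟨r, rfl⟩
        rw [show e * ((1 - e) * r) = (e - e * e) * r by noncomm_ring, hesq, sub_self,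
          zero_mul]
      · intro h
        refine ⟨x, ?_⟩
        rw [sub_mul, one_mul, h, sub_zero]
    set T' : Set R := {a | a ≠ 0 ∧ e₀ * a = 0} with hT'
    have hb₀T' : b₀ ∈ T' := by
      refine ⟨hb₀z, ?_⟩
      rw [hb₀, mul_sub, mul_one, he₀sq, sub_self]
    obtain ⟨a₀, ha₀T', ha₀min⟩ := dcc_min hdcc T' ⟨b₀, hb₀T'⟩
    obtain ⟨ha₀ne, ha₀e₀⟩ := ha₀T'
    have hmina₀ : ∀ b ∈ principalRightIdeal a₀, b ≠ 0 →
        principalRightIdeal b = principalRightIdeal a₀ := by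
      intro b hb hbne
      have hbe₀ : e₀ * b = 0 := by
        obtain ⟨r, rfl⟩ := hb
        rw [← mul_assoc, ha₀e₀, zero_mul]
      exact ha₀min b ⟨hbne, hbe₀⟩ (pri_subset hb)
    obtain ⟨f', hf'ne, hf'sq, hf'pri⟩ := brauer SP ha₀ne hmina₀
    have he₀f' : e₀ * f' = 0 := by
      have : f' ∈ principalRightIdeal a₀ := by rw [← hf'pri]; exact pri_self f'
      obtain ⟨r, hr⟩ := this
      rw [hr, ← mul_assoc, ha₀e₀, zero_mul]
    set f := f' * (1 - e₀) with hfdef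
    have h1e : (1 - e₀) * f' = f' := by
      rw [sub_mul, one_mul, he₀f', sub_zero]
    have hfsq : f * f = f := by
      rw [hfdef]
      calc f' * (1 - e₀) * (f' * (1 - e₀)) = f' * ((1 - e₀) * f') * (1 - e₀) := by
            noncomm_ring
        _ = f' * f' * (1 - e₀) := by rw [h1e]
        _ = f' * (1 - e₀) := by rw [hf'sq]
    have hff' : f * f' = f' := by
      rw [hfdef]
      calc f' * (1 - e₀) * f' = f' * ((1 - e₀) * f') := by noncomm_ring
        _ = f' * f' := by rw [h1e]
        _ = f' := hf'sq
    have hfne : f ≠ 0 := by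
      intro h
      rw [h, zero_mul] at hff'
      exact hf'ne hff'.symm
    have he₀f : e₀ * f = 0 := by
      rw [hfdef, ← mul_assoc, he₀f', zero_mul]
    have hfe₀ : f * e₀ = 0 := by
      rw [hfdef]
      calc f' * (1 - e₀) * e₀ = f' * (e₀ - e₀ * e₀) := by noncomm_ring
        _ = 0 := by rw [he₀sq, sub_self, mul_zero]
    have hfpri : principalRightIdeal f = principalRightIdeal a₀ := by
      have h1 : f ∈ principalRightIdeal f' := ⟨1 - e₀, rfl⟩
      have h2 : f' ∈ principalRightIdeal f := ⟨f', hff'.symm⟩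
      apply Set.Subset.antisymm
      · exact (pri_subset h1).trans (le_of_eq hf'pri)
      · rw [← hf'pri]; exact pri_subset h2
    have hminf : ∀ b ∈ principalRightIdeal f, b ≠ 0 →
        principalRightIdeal b = principalRightIdeal f := by
      intro b hb hbne
      rw [hfpri] at hb ⊢
      exact hmina₀ b hb hbne
    have hsimple : IsSimpleModule R (Submodule.span R ({f} : Set R)) :=
      simple_left SP hfne hfsq hminf
    set e₁ := e₀ + f with he₁def
    have he₁sq : e₁ * e₁ = e₁ := by
      rw [he₁def]
      calc (e₀ + f) * (e₀ + f) = e₀ * e₀ + e₀ * f + f * e₀ + f * f := by noncomm_ring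
        _ = e₀ + f := by rw [he₀sq, he₀f, hfe₀, hfsq, add_zero, add_zero]
    have he₁soc : Submodule.span R ({e₁} : Set R) ≤ socle := by
      rw [Submodule.span_le, Set.singleton_subset_iff]
      have hf_le : Submodule.span R ({f} : Set R) ≤ socle := le_sSup hsimple
      have h1 : e₀ ∈ socle := he₀soc (Submodule.mem_span_singleton_self e₀)
      have h2 : f ∈ socle := hf_le (Submodule.mem_span_singleton_self f)
      rw [he₁def]
      exact Submodule.add_mem _ h1 h2
    have hTmem : (1 : R) - e₁ ∈ T := ⟨e₁, he₁sq, he₁soc, rfl⟩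
    have hsubset : principalRightIdeal (1 - e₁) ⊆ principalRightIdeal b₀ := by
      rw [hb₀]
      intro x hx
      rw [hchar e₁ he₁sq] at hx
      rw [hchar e₀ he₀sq]
      have hstep : e₀ * x = e₀ * (e₁ * x) - (e₀ * f) * x := by
        rw [he₁def]
        calc e₀ * x = (e₀ * e₀) * x := by rw [he₀sq]
          _ = e₀ * ((e₀ + f) * x) - (e₀ * f) * x := by noncomm_ring
      rw [hstep, hx, mul_zero, he₀f, zero_mul, sub_zero]
    have heq := hb₀min _ hTmem (by rw [hb₀] at hsubset ⊢; exact hsubset)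
    have hfmem : f ∈ principalRightIdeal b₀ := by
      rw [hb₀, hchar e₀ he₀sq]
      exact he₀f
    rw [← heq, hchar e₁ he₁sq] at hfmem
    have he₁f : e₁ * f = f := by
      rw [he₁def, add_mul, he₀f, hfsq, zero_add]
    rw [he₁f] at hfmem
    exact hfne hfmem
end
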